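/- For every number n ≥ 1 of agents with normalized monotone valuations v_1,…,v_n on a finite set M of goods and every real ε > 0, there exists a partial allocation X = ⟨X_1,…,X_n⟩ with pool P = M \ (X_1 ∪ … ∪ X_n) such that: (i) for every pair of agents i, j and every good g ∈ X_j, (1+ε)·v_i(X_i) ≥ v_i(X_j \ {g}); (ii) for every agent i, (1+ε)·v_i(X_i) ≥ v_i(P); and (iii) |P| < n. -/

import Mathlib

open Finset

section AuxEFX

variable {G : Type} [DecidableEq G]

/-- From any envied subset of `S`, extract an inclusion-minimal envied subset. -/
lemma exists_minimal_envied {n : ℕ} (v : Fin n → Finset G → ℝ) (ε : ℝ)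
    (X : Fin n → Finset G) (S : Finset G)
    (hS : ∃ k Z, Z ⊆ S ∧ (1 + ε) * v k (X k) < v k Z) :
    ∃ j Z, Z ⊆ S ∧ (1 + ε) * v j (X j) < v j Z ∧
      ∀ Z' ⊂ Z, ∀ k, v k Z' ≤ (1 + ε) * v k (X k) := by
  classical
  obtain ⟨k0, Z0, hZ0S, hk0⟩ := hS
  set F := S.powerset.filter (fun Z => ∃ k, (1 + ε) * v k (X k) < v k Z) with hF
  have hne : F.Nonempty := by
    refine ⟨Z0, ?_⟩
    simp only [hF, mem_filter, mem_powerset]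
    exact ⟨hZ0S, k0, hk0⟩
  obtain ⟨Z, hZF, hZmin⟩ := F.exists_min_image Finset.card hne
  simp only [hF, mem_filter, mem_powerset] at hZF
  obtain ⟨hZS, j, hj⟩ := hZF
  refine ⟨j, Z, hZS, hj, ?_⟩
  intro Z' hZ' k
  by_contra hlt
  push_neg at hlt
  have hmem : Z' ∈ F := by
    simp only [hF, mem_filter, mem_powerset]
    exact ⟨hZ'.subset.trans hZS, k, hlt⟩
  exact absurd (Finset.card_lt_card hZ') (not_lt.2 (hZmin Z' hmem))

/-- Champion rotation: give each agent in `C` a new bundle that it envies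
beyond factor `1+ε` and which is minimally envied; this preserves the
approximate-EFX invariant and strictly increases the total value. -/
lemma rotation_good {n : ℕ} (M : Finset G) (v : Fin n → Finset G → ℝ)
    (hnorm : ∀ i, v i ∅ = 0)
    (hmono : ∀ i, ∀ S T : Finset G, S ⊆ T → v i S ≤ v i T)
    (ε : ℝ) (hε : 0 < ε)
    (X : Fin n → Finset G)
    (hXM : ∀ i, X i ⊆ M)
    (hXd : ∀ i j, i ≠ j → Disjoint (X i) (X j))
    (hA : ∀ k m : Fin n, ∀ h ∈ X m, v k (X m \ {h}) ≤ (1 + ε) * v k (X k))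
    (C : Finset (Fin n)) (hC : C.Nonempty) (N : Fin n → Finset G)
    (hsub : ∀ m ∈ C, N m ⊆ M)
    (hdN : ∀ m1 ∈ C, ∀ m2 ∈ C, m1 ≠ m2 → Disjoint (N m1) (N m2))
    (hdO : ∀ m ∈ C, ∀ k, k ∉ C → Disjoint (N m) (X k))
    (himp : ∀ m ∈ C, (1 + ε) * v m (X m) < v m (N m))
    (hmin : ∀ m ∈ C, ∀ h ∈ N m, ∀ k, v k (N m \ {h}) ≤ (1 + ε) * v k (X k)) :
    ∃ X' : Fin n → Finset G,
      (∀ i, X' i ⊆ M) ∧ (∀ i j, i ≠ j → Disjoint (X' i) (X' j)) ∧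
      (∀ k m : Fin n, ∀ h ∈ X' m, v k (X' m \ {h}) ≤ (1 + ε) * v k (X' k)) ∧
      (∑ i, v i (X i)) < ∑ i, v i (X' i) := by
  classical
  have hv0 : ∀ k S, 0 ≤ v k S := fun k S => (hnorm k) ▸ hmono k ∅ S (empty_subset S)
  refine ⟨fun m => if m ∈ C then N m else X m, ?_, ?_, ?_, ?_⟩
  · intro i
    by_cases hi : i ∈ C <;> simp only [hi, if_pos, if_neg, if_true, if_false]
    · exact hsub i hi
    · exact hXM i
  · intro i j hij
    by_cases hi : i ∈ C <;> by_cases hj : j ∈ C <;>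
      simp only [hi, hj, if_true, if_false, if_pos, if_neg]
    · exact hdN i hi j hj hij
    · exact hdO i hi j hj
    · exact (hdO j hj i hi).symm
    · exact hXd i j hij
  · -- the EFX invariant
    have hup : ∀ k : Fin n, v k (X k) ≤ v k (if k ∈ C then N k else X k) := by
      intro k
      by_cases hk : k ∈ C <;> simp only [hk, if_true, if_false]
      · have h1 : v k (X k) ≤ (1 + ε) * v k (X k) := by nlinarith [hv0 k (X k)]
        exact h1.trans (himp k hk).le
      · exact le_refl _
    intro k m h hh
    have hle : (1 + ε) * v k (X k) ≤ (1 + ε) * v k (if k ∈ C then N k else X k) :=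
      mul_le_mul_of_nonneg_left (hup k) (by linarith)
    by_cases hm : m ∈ C
    · simp only [hm, if_true] at hh ⊢
      exact (hmin m hm h hh k).trans hle
    · simp only [hm, if_false] at hh ⊢
      exact (hA k m h hh).trans hle
  · refine Finset.sum_lt_sum ?_ ?_
    · intro i _
      by_cases hi : i ∈ C <;> simp only [hi, if_true, if_false]
      · have h1 : v i (X i) ≤ (1 + ε) * v i (X i) := by nlinarith [hv0 i (X i)]
        exact h1.trans (himp i hi).le
      · exact le_refl _
    · obtain ⟨i, hi⟩ := hC
      refine ⟨i, mem_univ i, ?_⟩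
      simp only [hi, if_true]
      have h1 : v i (X i) ≤ (1 + ε) * v i (X i) := by nlinarith [hv0 i (X i)]
      exact h1.trans_lt (himp i hi)


end AuxEFX

/-- Approximate EFX with bounded charity: for every `ε > 0` there is a partial
allocation that is `(1+ε)`-approximately EFX, where nobody `(1+ε)`-approximately
envies the pool, and the pool has fewer than `n` goods. -/
theorem approx_efx_with_bounded_charity
    {G : Type} [DecidableEq G] (M : Finset G) (n : ℕ) (hn : 1 ≤ n)
    (v : Fin n → Finset G → ℝ)
    (hnorm : ∀ i, v i ∅ = 0)
    (hmono : ∀ i, ∀ S T : Finset G, S ⊆ T → v i S ≤ v i T)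
    (ε : ℝ) (hε : 0 < ε) :
    ∃ X : Fin n → Finset G,
      (∀ i, X i ⊆ M) ∧
      (∀ i j, i ≠ j → Disjoint (X i) (X j)) ∧
      (∀ i j : Fin n, ∀ g ∈ X j, v i (X j \ {g}) ≤ (1 + ε) * v i (X i)) ∧
      (∀ i, v i (M \ Finset.univ.biUnion X) ≤ (1 + ε) * v i (X i)) ∧
      (M \ Finset.univ.biUnion X).card < n := by
  classical
  have hv0 : ∀ i S, 0 ≤ v i S := fun i S => (hnorm i) ▸ hmono i ∅ S (Finset.empty_subset S)
  set Good : Set (Fin n → Finset G) :=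
    {X | (∀ i, X i ⊆ M) ∧ (∀ i j, i ≠ j → Disjoint (X i) (X j)) ∧
         ∀ k m : Fin n, ∀ h ∈ X m, v k (X m \ {h}) ≤ (1 + ε) * v k (X k)} with hGoodDef
  have hfin : Good.Finite := by
    have hpi : (Set.univ.pi (fun _ : Fin n => (↑M.powerset : Set (Finset G)))).Finite :=
      Set.Finite.pi (fun _ => M.powerset.finite_toSet)
    refine hpi.subset ?_
    intro Y hY
    rw [Set.mem_pi]
    intro i _
    simp only [Finset.coe_powerset, Set.mem_setOf_eq, Set.mem_preimage, Finset.mem_coe,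
      Finset.mem_powerset]
    exact hY.1 i
  have hne : Good.Nonempty := by
    refine ⟨fun _ => ∅, ?_, ?_, ?_⟩
    · intro i; exact Finset.empty_subset M
    · intro i j _; exact Finset.disjoint_empty_left _
    · intro k m h hh; exact absurd hh (Finset.notMem_empty h)
  set Phi : (Fin n → Finset G) → ℝ ×ₗ ℕ :=
    fun X => toLex (∑ i, v i (X i), ∑ i, (X i).card) with hPhiDef
  obtain ⟨X, hXG, hmax0⟩ := Set.Finite.exists_maximalFor Phi Good hfin hne
  obtain ⟨hXM, hXd, hA⟩ := hXG
  have hXGood : X ∈ Good := ⟨hXM, hXd, hA⟩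
  have hmax : ∀ X' ∈ Good, ¬ (Phi X < Phi X') := by
    intro X' h' hlt
    exact absurd (hmax0 h' hlt.le) (not_le.mpr hlt)
  set P : Finset G := M \ Finset.univ.biUnion X with hPdef
  have hPM : P ⊆ M := Finset.sdiff_subset
  have hPX : ∀ k, Disjoint P (X k) := by
    intro k
    refine Finset.disjoint_left.mpr ?_
    intro x hx hxk
    exact (Finset.mem_sdiff.mp hx).2 (Finset.mem_biUnion.mpr ⟨k, mem_univ k, hxk⟩)
  refine ⟨X, hXM, hXd, hA, ?_, ?_⟩
  · -- nobody (1+ε)-envies the pool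
    by_contra hB
    push_neg at hB
    obtain ⟨i, hi⟩ := hB
    obtain ⟨j, Z, hZP, hjZ, hZmin⟩ :=
      exists_minimal_envied v ε X P ⟨i, P, Finset.Subset.refl P, hi⟩
    obtain ⟨X', h1, h2, h3, h4⟩ :=
      rotation_good M v hnorm hmono ε hε X hXM hXd hA {j} ⟨j, mem_singleton_self j⟩
        (fun _ => Z)
        (fun m _ => hZP.trans hPM)
        (fun m1 h1 m2 h2 h12 => absurd ((mem_singleton.mp h1).trans (mem_singleton.mp h2).symm) h12)
        (fun m _ k _ => Finset.disjoint_of_subset_left hZP (hPX k))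
        (by intro m hm; rw [mem_singleton] at hm; subst hm; exact hjZ)
        (by
          intro m hm h hh k
          refine hZmin _ ?_ k
          rw [Finset.sdiff_singleton_eq_erase]
          exact Finset.erase_ssubset hh)
    refine hmax X' ⟨h1, h2, h3⟩ ?_
    rw [hPhiDef, Prod.Lex.lt_iff]
    exact Or.inl h4
  · -- the pool has fewer than n goods
    by_contra hC0
    push_neg at hC0
    obtain ⟨T, hTP, hTcard⟩ := Finset.exists_subset_card_eq hC0
    set eqv : {x // x ∈ T} ≃ Fin n := Finset.equivFinOfCardEq hTcard with heqv
    set g : Fin n → G := fun b => ((eqv.symm b : {x // x ∈ T}) : G) with hgdef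
    have gP : ∀ b, g b ∈ P := fun b => hTP (eqv.symm b).2
    have ginj : Function.Injective g := by
      intro b1 b2 h
      exact eqv.symm.injective (Subtype.ext h)
    have gX : ∀ b k, g b ∉ X k := fun b k hx => (Finset.disjoint_left.mp (hPX k)) (gP b) hx
    have gM : ∀ b, g b ∈ M := fun b => hPM (gP b)
    -- every agent's bundle extended by a fresh pool good has a minimally envied subset
    have hchamp : ∀ b : Fin n, ∃ j Z, Z ⊆ X b ∪ {g b} ∧ (1 + ε) * v j (X j) < v j Z ∧
        ∀ Z' ⊂ Z, ∀ k, v k Z' ≤ (1 + ε) * v k (X k) := by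
      intro b
      by_cases hcb : ∃ k, ∃ h ∈ X b ∪ {g b},
          (1 + ε) * v k (X k) < v k ((X b ∪ {g b}) \ {h})
      · obtain ⟨k, h, hh, hk⟩ := hcb
        exact exists_minimal_envied v ε X (X b ∪ {g b})
          ⟨k, (X b ∪ {g b}) \ {h}, Finset.sdiff_subset, hk⟩
      · push_neg at hcb
        exfalso
        set X' : Fin n → Finset G := fun m => if m = b then X b ∪ {g b} else X m with hX'def
        have hX'b : X' b = X b ∪ {g b} := by simp [hX'def]
        have hX'ne : ∀ m, m ≠ b → X' m = X m := by
          intro m hm; simp [hX'def, hm]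
        have hsubXX' : ∀ i, X i ⊆ X' i := by
          intro i
          by_cases hi : i = b
          · subst hi; rw [hX'b]; exact Finset.subset_union_left
          · rw [hX'ne i hi]
        have hup : ∀ i, v i (X i) ≤ v i (X' i) := fun i => hmono i _ _ (hsubXX' i)
        have hG1 : ∀ i, X' i ⊆ M := by
          intro i
          by_cases hi : i = b
          · subst hi; rw [hX'b]
            exact Finset.union_subset (hXM _) (Finset.singleton_subset_iff.mpr (gM _))
          · rw [hX'ne i hi]; exact hXM i
        have hdisjb : ∀ k, k ≠ b → Disjoint (X b ∪ {g b}) (X k) := by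
          intro k hk
          rw [Finset.disjoint_union_left]
          exact ⟨hXd b k (fun h => hk h.symm), Finset.disjoint_singleton_left.mpr (gX b k)⟩
        have hG2 : ∀ i j, i ≠ j → Disjoint (X' i) (X' j) := by
          intro i j hij
          by_cases hi : i = b <;> by_cases hj : j = b
          · exact absurd (hi.trans hj.symm) hij
          · subst hi; rw [hX'b, hX'ne j hj]; exact hdisjb j hj
          · subst hj; rw [hX'b, hX'ne i hi]; exact (hdisjb i hi).symm
          · rw [hX'ne i hi, hX'ne j hj]; exact hXd i j hij
        have hG3 : ∀ k m : Fin n, ∀ h ∈ X' m, v k (X' m \ {h}) ≤ (1 + ε) * v k (X' k) := by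
          intro k m h hh
          have hle : (1 + ε) * v k (X k) ≤ (1 + ε) * v k (X' k) :=
            mul_le_mul_of_nonneg_left (hup k) (by linarith)
          by_cases hm : m = b
          · subst hm; rw [hX'b] at hh ⊢
            exact (hcb k h hh).trans hle
          · rw [hX'ne m hm] at hh ⊢
            exact (hA k m h hh).trans hle
        have hsum : ∑ i, v i (X i) ≤ ∑ i, v i (X' i) :=
          Finset.sum_le_sum (fun i _ => hup i)
        have hcard : ∑ i, (X i).card < ∑ i, (X' i).card := by
          refine Finset.sum_lt_sum (fun i _ => Finset.card_le_card (hsubXX' i)) ⟨b, mem_univ b, ?_⟩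
          rw [hX'b, Finset.card_union_of_disjoint
            (Finset.disjoint_singleton_right.mpr (gX b b)), Finset.card_singleton]
          omega
        refine hmax X' ⟨hG1, hG2, hG3⟩ ?_
        rw [hPhiDef, Prod.Lex.lt_iff]
        rcases lt_or_eq_of_le hsum with h | h
        · exact Or.inl h
        · exact Or.inr ⟨h, hcard⟩
    choose f Zc hZs hZe hZm using hchamp
    -- find a periodic point of f
    have hper0 : ∃ a : Fin n, ∃ t, 0 < t ∧ f^[t] a = a := by
      have a0 : Fin n := ⟨0, hn⟩
      have hcard : (Finset.univ : Finset (Fin n)).card < (Finset.range (n + 1)).card := by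
        simp [Finset.card_range]
      obtain ⟨u, -, w, -, huw, he⟩ :=
        Finset.exists_ne_map_eq_of_card_lt_of_maps_to hcard
          (f := fun u => f^[u] a0) (fun u _ => mem_univ _)
      rcases lt_or_gt_of_ne huw with h | h
      · refine ⟨f^[u] a0, w - u, by omega, ?_⟩
        rw [← Function.iterate_add_apply, Nat.sub_add_cancel h.le]
        exact he.symm
      · refine ⟨f^[w] a0, u - w, by omega, ?_⟩
        rw [← Function.iterate_add_apply, Nat.sub_add_cancel h.le]
        exact he
    obtain ⟨a, hex⟩ := hper0
    set t₀ : ℕ := Nat.find hex with ht₀def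
    have ht₀ : 0 < t₀ ∧ f^[t₀] a = a := Nat.find_spec hex
    have hminper : ∀ t' < t₀, ¬ (0 < t' ∧ f^[t'] a = a) := fun t' h => Nat.find_min hex h
    -- injectivity of u ↦ f^[u] a on [0, t₀)
    have einj : ∀ u, u < t₀ → ∀ w, w < t₀ → f^[u] a = f^[w] a → u = w := by
      have key : ∀ u w, u < w → w < t₀ → f^[u] a ≠ f^[w] a := by
        intro u w huw hw heq
        have h1 : f^[(t₀ - w) + u] a = a := by
          rw [Function.iterate_add_apply, heq, ← Function.iterate_add_apply,
            Nat.sub_add_cancel hw.le]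
          exact ht₀.2
        exact hminper ((t₀ - w) + u) (by omega) ⟨by omega, h1⟩
      intro u hu w hw heq
      rcases lt_trichotomy u w with h1 | h1 | h1
      · exact absurd heq (key u w h1 hw)
      · exact h1
      · exact absurd heq.symm (key w u h1 hu)
    set C : Finset (Fin n) := (Finset.range t₀).image (fun u => f^[u] a) with hCdef
    have hCne : C.Nonempty := ⟨a, Finset.mem_image.mpr ⟨0, Finset.mem_range.mpr ht₀.1, rfl⟩⟩
    have hCmemu : ∀ u, u < t₀ → f^[u] a ∈ C := by
      intro u hu
      exact Finset.mem_image.mpr ⟨u, Finset.mem_range.mpr hu, rfl⟩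
    set N : Fin n → Finset G :=
      fun m => if h : ∃ u, u < t₀ ∧ f^[u + 1] a = m then Zc (f^[h.choose] a) else ∅ with hNdef
    have key : ∀ m ∈ C, ∃ u, u < t₀ ∧ f^[u + 1] a = m ∧ N m = Zc (f^[u] a) := by
      intro m hm
      obtain ⟨w, hw, hwm⟩ := Finset.mem_image.mp hm
      rw [Finset.mem_range] at hw
      have hex2 : ∃ u, u < t₀ ∧ f^[u + 1] a = m := by
        rcases Nat.eq_zero_or_pos w with h0 | h0
        · refine ⟨t₀ - 1, by omega, ?_⟩
          rw [Nat.sub_add_cancel ht₀.1, ht₀.2, ← hwm, h0]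
          rfl
        · refine ⟨w - 1, by omega, ?_⟩
          rw [Nat.sub_add_cancel h0]
          exact hwm
      refine ⟨hex2.choose, hex2.choose_spec.1, hex2.choose_spec.2, ?_⟩
      simp only [hNdef, dif_pos hex2]
    -- the donated bundles and needed facts
    have hZsub : ∀ b, Zc b ⊆ M := by
      intro b
      exact (hZs b).trans (Finset.union_subset (hXM b) (Finset.singleton_subset_iff.mpr (gM b)))
    have hbig_disj : ∀ b1 b2 : Fin n, b1 ≠ b2 →
        Disjoint (X b1 ∪ {g b1}) (X b2 ∪ {g b2}) := by
      intro b1 b2 hb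
      rw [Finset.disjoint_union_left, Finset.disjoint_union_right, Finset.disjoint_union_right]
      refine ⟨⟨hXd b1 b2 hb, Finset.disjoint_singleton_right.mpr (gX b2 b1)⟩,
        ⟨Finset.disjoint_singleton_left.mpr (gX b1 b2), ?_⟩⟩
      rw [Finset.disjoint_singleton_left, Finset.mem_singleton]
      exact fun h => hb (ginj h)
    obtain ⟨X', h1, h2, h3, h4⟩ :=
      rotation_good M v hnorm hmono ε hε X hXM hXd hA C hCne N
        (by
          intro m hm
          obtain ⟨u, hu, hum, hNm⟩ := key m hm
          rw [hNm]
          exact hZsub _)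
        (by
          intro m1 hm1 m2 hm2 h12
          obtain ⟨u1, hu1, hum1, hNm1⟩ := key m1 hm1
          obtain ⟨u2, hu2, hum2, hNm2⟩ := key m2 hm2
          rw [hNm1, hNm2]
          have hb : f^[u1] a ≠ f^[u2] a := by
            intro h
            have : u1 = u2 := einj u1 hu1 u2 hu2 h
            exact h12 (by rw [← hum1, ← hum2, this])
          exact Finset.disjoint_of_subset_left (hZs _)
            (Finset.disjoint_of_subset_right (hZs _) (hbig_disj _ _ hb))
        )
        (by
          intro m hm k hk
          obtain ⟨u, hu, hum, hNm⟩ := key m hm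
          rw [hNm]
          have hbk : f^[u] a ≠ k := fun h => hk (h ▸ hCmemu u hu)
          refine Finset.disjoint_of_subset_left (hZs _) ?_
          rw [Finset.disjoint_union_left]
          exact ⟨hXd _ k hbk, Finset.disjoint_singleton_left.mpr (gX _ k)⟩)
        (by
          intro m hm
          obtain ⟨u, hu, hum, hNm⟩ := key m hm
          have hmf : m = f (f^[u] a) := by rw [← hum, Function.iterate_succ_apply']
          rw [hNm, hmf]
          exact hZe _)
        (by
          intro m hm h hh k
          obtain ⟨u, hu, hum, hNm⟩ := key m hm
          rw [hNm] at hh ⊢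
          refine hZm (f^[u] a) _ ?_ k
          rw [Finset.sdiff_singleton_eq_erase]
          exact Finset.erase_ssubset hh)
    refine hmax X' ⟨h1, h2, h3⟩ ?_
    rw [hPhiDef, Prod.Lex.lt_iff]
    exact Or.inl h4
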